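/- Let n ≥ 1 and let L be a ℤ-submodule of ℤ^{2n} of rank r. Then there exists an ℝ-linear isomorphism φ : ℝ^{2n} → ℂ^n such that the ℂ-linear span of φ(L) (the image under φ of L viewed inside ℝ^{2n} via the canonical inclusion ℤ^{2n} ⊆ ℝ^{2n}) has complex dimension min(r, n). -/

import Mathlib

open Submodule Module

noncomputable section

/-- Coordinatewise cast `ℤ^m → ℝ^m` as a `ℤ`-linear map. -/
def castLin (m : ℕ) : (Fin m → ℤ) →ₗ[ℤ] (Fin m → ℝ) where
  toFun x := fun i => (x i : ℝ)
  map_add' x y := by funext i; simp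
  map_smul' c x := by funext i; simp

lemma basis_cast_li {m : ℕ} (bM : Basis (Fin m) ℤ (Fin m → ℤ)) :
    LinearIndependent ℝ (fun i => castLin m (bM i)) := by
  classical
  set A : Matrix (Fin m) (Fin m) ℤ := (Pi.basisFun ℤ (Fin m)).toMatrix ⇑bM with hA
  set B : Matrix (Fin m) (Fin m) ℝ := A.map (Int.cast : ℤ → ℝ) with hBdef
  have hAu : IsUnit A :=
    letI := (Pi.basisFun ℤ (Fin m)).invertibleToMatrix bM
    isUnit_of_invertible _
  have hB : IsUnit B := by
    have := hAu.map (Int.castRingHom ℝ).mapMatrix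
    simpa [RingHom.mapMatrix_apply, hBdef] using this
  have h := Matrix.linearIndependent_cols_iff_isUnit.2 hB
  have heq : (fun i => castLin m (bM i)) = fun i => Matrix.transpose B i := by
    funext i
    funext j
    simp [castLin, hBdef, hA, Matrix.transpose_apply, Matrix.map_apply, Basis.toMatrix_apply]
  rw [heq]
  exact h

set_option maxHeartbeats 1000000 in
/-- for every `ℤ`-submodule `L` of `ℤ^{2n}` of rank `r`, there is an
`ℝ`-linear isomorphism `φ : ℝ^{2n} ≃ ℂ^n` such that the `ℂ`-linear span of the image of
`L` (included in `ℝ^{2n}` canonically) has complex dimension `min r n`. -/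
theorem stmt10 (n r : ℕ) (hn : 1 ≤ n)
    (L : Submodule ℤ (Fin (2 * n) → ℤ)) (hL : Module.finrank ℤ L = r) :
    ∃ φ : (Fin (2 * n) → ℝ) ≃ₗ[ℝ] (Fin n → ℂ),
      Module.finrank ℂ (Submodule.span ℂ
        (φ '' ((fun (x : Fin (2 * n) → ℤ) (i : Fin (2 * n)) => (x i : ℝ)) '' (L : Set (Fin (2 * n) → ℤ))))) = min r n := by
  classical
  obtain ⟨r', snf⟩ := L.smithNormalForm (Pi.basisFun ℤ (Fin (2 * n)))
  have hr' : r' = r := by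
    rw [← hL, finrank_eq_card_basis snf.bN, Fintype.card_fin]
  rw [hr'] at snf
  have hrn : r ≤ 2 * n := by
    simpa using Fintype.card_le_of_embedding snf.f
  set c := castLin (2 * n) with hc
  set v : Fin r → (Fin (2 * n) → ℝ) := fun i => c ((snf.bN i : Fin (2 * n) → ℤ)) with hv
  set V : Submodule ℝ (Fin (2 * n) → ℝ) := Submodule.span ℝ (Set.range v) with hVdef
  -- linear independence of v over ℝ
  have hvli : LinearIndependent ℝ v := by
    have hbm := basis_cast_li snf.bM
    have hcomp : LinearIndependent ℝ (fun i => c (snf.bM (snf.f i))) :=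
      hbm.comp snf.f snf.f.injective
    have ha : ∀ i, ((snf.a i : ℝ)) ≠ 0 := by
      intro i h
      have hbn : (snf.bN i : Fin (2 * n) → ℤ) ≠ 0 := by
        simpa [Submodule.coe_eq_zero] using snf.bN.ne_zero i
      rw [snf.snf i] at hbn
      have : snf.a i = 0 := by exact_mod_cast h
      simp [this] at hbn
    have h2 := hcomp.units_smul (fun i => Units.mk0 ((snf.a i : ℝ)) (ha i))
    have heq : ((fun i => Units.mk0 ((snf.a i : ℝ)) (ha i)) • fun i => c (snf.bM (snf.f i))) = v := by
      funext i
      simp only [Pi.smul_apply', hv]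
      rw [snf.snf i, map_smul]
      rw [Units.smul_mk0, Int.cast_smul_eq_zsmul]
    rw [heq] at h2
    exact h2
  have hVr : finrank ℝ V = r := by
    rw [hVdef, finrank_span_eq_card hvli, Fintype.card_fin]
  -- the span of the image of L is V
  have hS : Submodule.span ℝ (⇑c '' (L : Set (Fin (2 * n) → ℤ))) = V := by
    have hLspan : L = Submodule.span ℤ (Set.range (fun i => (snf.bN i : Fin (2 * n) → ℤ))) := by
      conv_lhs => rw [← Submodule.map_subtype_top L]
      rw [← snf.bN.span_eq, Submodule.map_span]
      congr 1
      rw [← Set.range_comp]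
      rfl
    have h2 : Submodule.map c L = Submodule.span ℤ (Set.range v) := by
      conv_lhs => rw [hLspan]
      rw [Submodule.map_span]
      congr 1
      rw [← Set.range_comp]
      rfl
    calc Submodule.span ℝ (⇑c '' (L : Set (Fin (2 * n) → ℤ)))
        = Submodule.span ℝ ((Submodule.map c L : Set (Fin (2 * n) → ℝ))) := by
          rw [Submodule.map_coe]
      _ = Submodule.span ℝ ((Submodule.span ℤ (Set.range v) : Set (Fin (2 * n) → ℝ))) := by rw [h2]
      _ = V := by rw [Submodule.span_span_of_tower]
  -- target side
  set w : Fin r → (Fin n → ℂ) := fun j =>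
    if h : (j : ℕ) < n then Pi.single (⟨(j : ℕ), h⟩ : Fin n) (1 : ℂ)
    else Pi.single (⟨(j : ℕ) - n, by omega⟩ : Fin n) Complex.I with hw
  set bC : Basis ((_ : Fin n) × Fin 2) ℝ (Fin n → ℂ) :=
    Pi.basis (fun _ : Fin n => Complex.basisOneI) with hbC
  set g : Fin r → ((_ : Fin n) × Fin 2) := fun j =>
    if h : (j : ℕ) < n then ⟨⟨(j : ℕ), h⟩, 0⟩ else ⟨⟨(j : ℕ) - n, by omega⟩, 1⟩ with hg
  have hginj : Function.Injective g := by
    intro a b hab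
    by_cases ha : (a : ℕ) < n <;> by_cases hb : (b : ℕ) < n <;>
      simp [hg, ha, hb, Sigma.mk.inj_iff, Fin.ext_iff] at hab <;>
      exact Fin.ext (by omega)
  have hwg : w = fun j => bC (g j) := by
    funext j
    by_cases h : (j : ℕ) < n <;>
      simp [hw, hg, hbC, h, Pi.basis_apply, Complex.coe_basisOneI,
        Matrix.cons_val_zero, Matrix.cons_val_one, Matrix.head_cons]
  have hwli : LinearIndependent ℝ w := by
    rw [hwg]; exact bC.linearIndependent.comp g hginj
  set U : Submodule ℝ (Fin n → ℂ) := Submodule.span ℝ (Set.range w) with hUdef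
  have hUr : finrank ℝ U = r := by
    rw [hUdef, finrank_span_eq_card hwli, Fintype.card_fin]
  -- complex span of w
  set u : Fin (min r n) → (Fin n → ℂ) := fun k =>
    Pi.single (⟨(k : ℕ), lt_of_lt_of_le k.isLt (min_le_right r n)⟩ : Fin n) (1 : ℂ) with hu
  have huli : LinearIndependent ℂ u := by
    have heq : u = (fun k : Fin n => Pi.single k (1 : ℂ)) ∘
        (fun k : Fin (min r n) => (⟨(k : ℕ), lt_of_lt_of_le k.isLt (min_le_right r n)⟩ : Fin n)) := rfl
    rw [heq]
    have hbf : LinearIndependent ℂ (fun k : Fin n => Pi.single k (1 : ℂ)) := by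
      have h := (Pi.basisFun ℂ (Fin n)).linearIndependent
      have hcoe : ⇑(Pi.basisFun ℂ (Fin n)) = fun k => Pi.single k (1 : ℂ) := by
        funext k; simp
      rwa [hcoe] at h
    exact hbf.comp _ (fun a b hab => by simpa [Fin.ext_iff] using hab)
  have hspanwu : Submodule.span ℂ (Set.range w) = Submodule.span ℂ (Set.range u) := by
    apply le_antisymm
    · rw [Submodule.span_le]
      rintro x ⟨j, rfl⟩
      by_cases h : (j : ℕ) < n
      · have hj : (j : ℕ) < min r n := by omega
        have hwj : w j = u ⟨(j : ℕ), hj⟩ := by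
          rw [hw, hu]
          simp only [dif_pos h]
        rw [hwj]
        exact Submodule.subset_span ⟨_, rfl⟩
      · have hj : (j : ℕ) - n < min r n := by omega
        have hwj : w j = Complex.I • u ⟨(j : ℕ) - n, hj⟩ := by
          rw [hw, hu]
          simp only [dif_neg h]
          rw [← Pi.single_smul, smul_eq_mul, mul_one]
        rw [hwj]
        exact Submodule.smul_mem _ _ (Submodule.subset_span ⟨_, rfl⟩)
    · rw [Submodule.span_le]
      rintro x ⟨k, rfl⟩
      have hk : (k : ℕ) < r := lt_of_lt_of_le k.isLt (min_le_left r n)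
      have hkn : ((⟨(k : ℕ), hk⟩ : Fin r) : ℕ) < n := lt_of_lt_of_le k.isLt (min_le_right r n)
      have huk : u k = w ⟨(k : ℕ), hk⟩ := by
        rw [hw, hu]
        simp only [dif_pos hkn]
      rw [huk]
      exact Submodule.subset_span ⟨_, rfl⟩
  have hUC : finrank ℂ (Submodule.span ℂ (U : Set (Fin n → ℂ))) = min r n := by
    rw [hUdef, Submodule.span_span_of_tower, hspanwu, finrank_span_eq_card huli, Fintype.card_fin]
  -- build the isomorphism
  obtain ⟨V', hV'⟩ := Submodule.exists_isCompl V
  obtain ⟨U', hU'⟩ := Submodule.exists_isCompl U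
  have hdim1 : finrank ℝ (Fin (2 * n) → ℝ) = 2 * n := by
    simp [Module.finrank_fintype_fun_eq_card]
  have hdim2 : finrank ℝ (Fin n → ℂ) = 2 * n := by
    rw [Module.finrank_pi_fintype]
    simp [Complex.finrank_real_complex, Finset.sum_const, smul_eq_mul, mul_comm]
  have hV'r : finrank ℝ V' = 2 * n - r := by
    have h := Submodule.finrank_add_eq_of_isCompl hV'
    rw [hdim1, hVr] at h
    omega
  have hU'r : finrank ℝ U' = 2 * n - r := by
    have h := Submodule.finrank_add_eq_of_isCompl hU'
    rw [hdim2, hUr] at h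
    omega
  obtain ⟨e1⟩ := FiniteDimensional.nonempty_linearEquiv_of_finrank_eq (hVr.trans hUr.symm)
  obtain ⟨e2⟩ := FiniteDimensional.nonempty_linearEquiv_of_finrank_eq (hV'r.trans hU'r.symm)
  set φ : (Fin (2 * n) → ℝ) ≃ₗ[ℝ] (Fin n → ℂ) :=
    (Submodule.prodEquivOfIsCompl V V' hV').symm ≪≫ₗ (e1.prodCongr e2) ≪≫ₗ
      (Submodule.prodEquivOfIsCompl U U' hU') with hφ
  refine ⟨φ, ?_⟩
  have hmap1 : ∀ x ∈ V, φ x ∈ U := by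
    intro x hx
    have h1 : (Submodule.prodEquivOfIsCompl V V' hV').symm x = ((⟨x, hx⟩ : V), (0 : V')) := by
      rw [LinearEquiv.symm_apply_eq, Submodule.coe_prodEquivOfIsCompl']
      simp
    have h2 : φ x = ↑(e1 (⟨x, hx⟩ : V)) + ↑(e2 (0 : V')) := by
      rw [hφ]
      rw [LinearEquiv.trans_apply, LinearEquiv.trans_apply, h1, LinearEquiv.prodCongr_apply,
        Submodule.coe_prodEquivOfIsCompl']
    have h3 : φ x = ↑(e1 (⟨x, hx⟩ : V)) := by
      rw [h2, map_zero]
      simp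
    rw [h3]
    exact (e1 (⟨x, hx⟩ : V)).2
  have hmap2 : ∀ y ∈ U, φ.symm y ∈ V := by
    intro y hy
    have h1 : (Submodule.prodEquivOfIsCompl U U' hU').symm y = ((⟨y, hy⟩ : U), (0 : U')) := by
      rw [LinearEquiv.symm_apply_eq, Submodule.coe_prodEquivOfIsCompl']
      simp
    have h2 : φ.symm y = ↑(e1.symm (⟨y, hy⟩ : U)) + ↑(e2.symm (0 : U')) := by
      rw [hφ]
      rw [LinearEquiv.trans_symm, LinearEquiv.trans_symm, LinearEquiv.trans_apply,
        LinearEquiv.trans_apply, LinearEquiv.symm_symm, h1, LinearEquiv.prodCongr_symm,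
        LinearEquiv.prodCongr_apply, Submodule.coe_prodEquivOfIsCompl']
    have h3 : φ.symm y = ↑(e1.symm (⟨y, hy⟩ : U)) := by
      rw [h2, map_zero]
      simp
    rw [h3]
    exact (e1.symm (⟨y, hy⟩ : U)).2
  have hmapVU : Submodule.map (φ : (Fin (2 * n) → ℝ) →ₗ[ℝ] (Fin n → ℂ)) V = U := by
    apply le_antisymm
    · rw [Submodule.map_le_iff_le_comap]
      intro x hx
      exact hmap1 x hx
    · intro y hy
      rw [Submodule.mem_map]
      exact ⟨φ.symm y, hmap2 y hy, by simp⟩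
  have hstep : Submodule.span ℝ (⇑φ '' (⇑c '' (L : Set (Fin (2 * n) → ℤ)))) = U := by
    rw [show ⇑φ = ⇑(φ : (Fin (2 * n) → ℝ) →ₗ[ℝ] (Fin n → ℂ)) from rfl,
      ← Submodule.map_span, hS, hmapVU]
  rw [show (fun (x : Fin (2 * n) → ℤ) (i : Fin (2 * n)) => ((x i : ℤ) : ℝ)) = ⇑c from rfl]
  rw [← Submodule.span_span_of_tower (R := ℝ) (S := ℂ), hstep]
  exact hUC
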